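/- The operator T defined by T(u)(t) = H₁[u]·γ(t) + H₂[u] + ∫₀¹ K(t,s) f(s,u(s)) ds maps C([0,1],ℝ) into C([0,1],ℝ) and is completely continuous, i.e. T is continuous and maps every bounded subset of C([0,1],ℝ) to a relatively compact subset of C([0,1],ℝ). -/
import Mathlib


open Set MeasureTheory BoundedContinuousFunction

/-- The Green's function `K(t,s) = β + ((η−s)^{α−1}/Γ(α))·χ_{[0,η]}(s) −
((t−s)^{α−1}/Γ(α))·χ_{[0,t]}(s)`. -/
noncomputable def Kker (α η β t s : ℝ) : ℝ :=
  β + (Set.Icc (0:ℝ) η).indicator (fun x => (η - x) ^ (α - 1) / Real.Gamma α) s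
    - (Set.Icc (0:ℝ) t).indicator (fun x => (t - x) ^ (α - 1) / Real.Gamma α) s

/-- The function `γ(t) = β/Γ(3−α) + η − t`. -/
noncomputable def gam (α η β t : ℝ) : ℝ := β / Real.Gamma (3 - α) + η - t

lemma rpow_add_le_add_rpow' {a b p : ℝ} (ha : 0 ≤ a) (hb : 0 ≤ b) (hp : 0 ≤ p) (hp1 : p ≤ 1) :
    (a + b) ^ p ≤ a ^ p + b ^ p := by
  have h := NNReal.rpow_add_le_add_rpow a.toNNReal b.toNNReal hp hp1
  rw [← Real.toNNReal_add ha hb] at h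
  have h2 := NNReal.coe_le_coe.2 h
  rwa [NNReal.coe_rpow, NNReal.coe_add, NNReal.coe_rpow, NNReal.coe_rpow,
    Real.coe_toNNReal _ (by linarith), Real.coe_toNNReal _ ha, Real.coe_toNNReal _ hb] at h2

lemma abs_rpow_sub_rpow_le' {p : ℝ} (hp : 0 < p) (hp1 : p ≤ 1) {a b : ℝ} (ha : 0 ≤ a)
    (hb : 0 ≤ b) : |a ^ p - b ^ p| ≤ |a - b| ^ p := by
  wlog hab : b ≤ a with H
  · rw [abs_sub_comm, abs_sub_comm a b]; exact H hp hp1 hb ha (le_of_not_ge hab)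
  have h1 : a ^ p ≤ b ^ p + (a - b) ^ p := by
    have h := rpow_add_le_add_rpow' hb (sub_nonneg.2 hab) hp.le hp1
    have e : b + (a - b) = a := by ring
    rwa [e] at h
  have h2 : b ^ p ≤ a ^ p := Real.rpow_le_rpow hb hab hp.le
  rw [abs_of_nonneg (sub_nonneg.2 h2), abs_of_nonneg (sub_nonneg.2 hab)]
  linarith

/-- A globally continuous version of the kernel. -/
noncomputable def Kp (α η β t s : ℝ) : ℝ :=
  β + max (η - s) 0 ^ (α - 1) / Real.Gamma α - max (t - s) 0 ^ (α - 1) / Real.Gamma α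

lemma Kp_cont {α : ℝ} (hα1 : 1 < α) (η β : ℝ) :
    Continuous fun q : ℝ × ℝ => Kp α η β q.1 q.2 := by
  have hr : Continuous fun x : ℝ => x ^ (α - 1) :=
    continuous_iff_continuousAt.2 fun x =>
      Real.continuousAt_rpow_const x (α - 1) (Or.inr (by linarith))
  apply Continuous.sub
  · apply Continuous.add continuous_const
    exact (hr.comp ((continuous_const.sub continuous_snd).max continuous_const)).div_const _
  · exact (hr.comp ((continuous_fst.sub continuous_snd).max continuous_const)).div_const _

lemma Kp_eq_Kker {α : ℝ} (hα1 : 1 < α) (η β : ℝ) {t s : ℝ} (ht : t ∈ Set.Icc (0:ℝ) 1)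
    (hs : s ∈ Set.Icc (0:ℝ) 1) : Kker α η β t s = Kp α η β t s := by
  have hne : α - 1 ≠ 0 := by intro h; linarith [sub_eq_zero.1 h]
  unfold Kker Kp
  congr 1
  · congr 1
    rcases le_or_gt s η with h | h
    · rw [Set.indicator_of_mem (Set.mem_Icc.2 ⟨hs.1, h⟩), max_eq_left (by linarith)]
    · rw [Set.indicator_of_notMem (fun hmem => absurd hmem.2 (not_le.2 h)),
        max_eq_right (by linarith), Real.zero_rpow hne, zero_div]
  · rcases le_or_gt s t with h | h
    · rw [Set.indicator_of_mem (Set.mem_Icc.2 ⟨hs.1, h⟩), max_eq_left (by linarith)]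
    · rw [Set.indicator_of_notMem (fun hmem => absurd hmem.2 (not_le.2 h)),
        max_eq_right (by linarith), Real.zero_rpow hne, zero_div]

lemma Kp_bound {α η β : ℝ} (hα1 : 1 < α) (hη1 : η < 1) (hβ : 0 < β) {t s : ℝ}
    (ht : t ∈ Set.Icc (0:ℝ) 1) (hs : s ∈ Set.Icc (0:ℝ) 1) :
    |Kp α η β t s| ≤ β + 2 / Real.Gamma α := by
  have hΓ : 0 < Real.Gamma α := Real.Gamma_pos_of_pos (by linarith)
  have hp : (0:ℝ) ≤ α - 1 := by linarith
  have h1 : (0:ℝ) ≤ max (η - s) 0 ^ (α - 1) := Real.rpow_nonneg (le_max_right _ _) _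
  have h2 : max (η - s) 0 ^ (α - 1) ≤ 1 :=
    Real.rpow_le_one (le_max_right _ _) (max_le (by linarith [hs.1]) zero_le_one) hp
  have h3 : (0:ℝ) ≤ max (t - s) 0 ^ (α - 1) := Real.rpow_nonneg (le_max_right _ _) _
  have h4 : max (t - s) 0 ^ (α - 1) ≤ 1 :=
    Real.rpow_le_one (le_max_right _ _) (max_le (by linarith [hs.1, ht.2]) zero_le_one) hp
  have hd1 : max (η - s) 0 ^ (α - 1) / Real.Gamma α ≤ 1 / Real.Gamma α := by gcongr
  have hd2 : max (t - s) 0 ^ (α - 1) / Real.Gamma α ≤ 1 / Real.Gamma α := by gcongr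
  have hd3 : (0:ℝ) ≤ max (η - s) 0 ^ (α - 1) / Real.Gamma α := by positivity
  have hd4 : (0:ℝ) ≤ max (t - s) 0 ^ (α - 1) / Real.Gamma α := by positivity
  have he : (2:ℝ) / Real.Gamma α = 1 / Real.Gamma α + 1 / Real.Gamma α := by ring
  rw [Kp, abs_le]
  constructor <;> rw [he] <;> linarith

lemma Kp_holder {α η β : ℝ} (hα1 : 1 < α) (hα2 : α ≤ 2) (t t' s : ℝ) :
    |Kp α η β t s - Kp α η β t' s| ≤ |t - t'| ^ (α - 1) / Real.Gamma α := by
  have hΓ : 0 < Real.Gamma α := Real.Gamma_pos_of_pos (by linarith)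
  have he : Kp α η β t s - Kp α η β t' s
      = (max (t' - s) 0 ^ (α - 1) - max (t - s) 0 ^ (α - 1)) / Real.Gamma α := by
    unfold Kp; ring
  rw [he, abs_div, abs_of_pos hΓ]
  gcongr
  calc |max (t' - s) 0 ^ (α - 1) - max (t - s) 0 ^ (α - 1)|
      ≤ |max (t' - s) 0 - max (t - s) 0| ^ (α - 1) :=
        abs_rpow_sub_rpow_le' (by linarith) (by linarith) (le_max_right _ _) (le_max_right _ _)
    _ ≤ |t - t'| ^ (α - 1) := by
        apply Real.rpow_le_rpow (abs_nonneg _) _ (by linarith)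
        calc |max (t' - s) 0 - max (t - s) 0| ≤ |t' - s - (t - s)| :=
              abs_max_sub_max_le_abs _ _ _
          _ = |t - t'| := by rw [abs_sub_comm]; congr 1; ring

set_option maxHeartbeats 2000000 in
/-- the operator
`T(u)(t) = H₁[u]·γ(t) + H₂[u] + ∫₀¹ K(t,s) f(s,u(s)) ds` maps `C([0,1],ℝ)`
into itself and is completely continuous: it is continuous and maps bounded sets
to relatively compact sets. -/
theorem stmt_11 (α η β : ℝ) (hα1 : 1 < α) (hα2 : α ≤ 2) (hη0 : 0 < η) (hη1 : η < 1)
    (hβ : 0 < β)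
    (f : ℝ → ℝ → ℝ)
    (hf : ContinuousOn (fun p : ℝ × ℝ => f p.1 p.2) (Set.Icc (0:ℝ) 1 ×ˢ Set.univ))
    (hf0 : ∀ t ∈ Set.Icc (0:ℝ) 1, ∀ x : ℝ, 0 ≤ f t x)
    (H₁ H₂ : ContinuousMap (Set.Icc (0:ℝ) 1) ℝ → ℝ)
    (hH₁c : Continuous H₁) (hH₂c : Continuous H₂)
    (hH₁0 : ∀ u, 0 ≤ H₁ u) (hH₂0 : ∀ u, 0 ≤ H₂ u)
    (hH₁b : ∀ S : Set (ContinuousMap (Set.Icc (0:ℝ) 1) ℝ),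
      Bornology.IsBounded S → Bornology.IsBounded (H₁ '' S))
    (hH₂b : ∀ S : Set (ContinuousMap (Set.Icc (0:ℝ) 1) ℝ),
      Bornology.IsBounded S → Bornology.IsBounded (H₂ '' S)) :
    ∃ T : ContinuousMap (Set.Icc (0:ℝ) 1) ℝ → ContinuousMap (Set.Icc (0:ℝ) 1) ℝ,
      (∀ u t, T u t = H₁ u * gam α η β (t : ℝ) + H₂ u +
        ∫ s in (0:ℝ)..1, Kker α η β (t : ℝ) s * f s (Set.IccExtend zero_le_one u s)) ∧
      Continuous T ∧
      ∀ S : Set (ContinuousMap (Set.Icc (0:ℝ) 1) ℝ),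
        Bornology.IsBounded S → IsCompact (closure (T '' S)) := by
  classical
  have hΓ : 0 < Real.Gamma α := Real.Gamma_pos_of_pos (by linarith)
  have hΓ3 : 0 < Real.Gamma (3 - α) := Real.Gamma_pos_of_pos (by linarith)
  have hgamc : Continuous fun t : ℝ => gam α η β t := by
    unfold gam; fun_prop
  -- continuous extension of `f`
  set fc : ℝ × ℝ → ℝ := fun q => f (Set.projIcc (0:ℝ) 1 zero_le_one q.1 : ℝ) q.2 with hfc_def
  have hfcc : Continuous fc := by
    have h : Continuous ((fun p : ℝ × ℝ => f p.1 p.2) ∘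
        (fun q : ℝ × ℝ => ((Set.projIcc (0:ℝ) 1 zero_le_one q.1 : ℝ), q.2))) := by
      apply hf.comp_continuous
      · exact ((continuous_projIcc.comp continuous_fst).subtype_val).prodMk continuous_snd
      · intro q
        exact Set.mem_prod.2 ⟨(Set.projIcc (0:ℝ) 1 zero_le_one q.1).2, Set.mem_univ _⟩
    exact h
  have hfc_eq : ∀ s ∈ Set.Icc (0:ℝ) 1, ∀ y : ℝ, fc (s, y) = f s y := by
    intro s hs y
    simp only [hfc_def, Set.projIcc_of_mem zero_le_one hs]
  -- the parametrized integrand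
  set F : (ContinuousMap (Set.Icc (0:ℝ) 1) ℝ × ℝ) → ℝ → ℝ :=
    fun x s => Kp α η β x.2 s * fc (s, x.1 (Set.projIcc (0:ℝ) 1 zero_le_one s)) with hF_def
  have hev : Continuous fun p : (ContinuousMap (Set.Icc (0:ℝ) 1) ℝ × ℝ) × ℝ =>
      p.1.1 (Set.projIcc (0:ℝ) 1 zero_le_one p.2) := by
    have h1 : Continuous fun p : (ContinuousMap (Set.Icc (0:ℝ) 1) ℝ × ℝ) × ℝ =>
        (p.1.1, Set.projIcc (0:ℝ) 1 zero_le_one p.2) :=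
      (continuous_fst.fst).prodMk ((continuous_projIcc).comp continuous_snd)
    exact continuous_eval.comp h1
  have hFc : Continuous (Function.uncurry F) := by
    have h2 : Continuous fun p : (ContinuousMap (Set.Icc (0:ℝ) 1) ℝ × ℝ) × ℝ =>
        Kp α η β p.1.2 p.2 :=
      (Kp_cont hα1 η β).comp ((continuous_fst.snd).prodMk continuous_snd)
    have h3 : Continuous fun p : (ContinuousMap (Set.Icc (0:ℝ) 1) ℝ × ℝ) × ℝ =>
        fc (p.2, p.1.1 (Set.projIcc (0:ℝ) 1 zero_le_one p.2)) :=
      hfcc.comp (continuous_snd.prodMk hev)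
    exact h2.mul h3
  have hIc : ∀ x : ContinuousMap (Set.Icc (0:ℝ) 1) ℝ × ℝ, Continuous (F x) := fun x =>
    hFc.comp (continuous_const.prodMk continuous_id)
  have hint : Continuous fun x : ContinuousMap (Set.Icc (0:ℝ) 1) ℝ × ℝ =>
      ∫ s in (0:ℝ)..1, F x s :=
    intervalIntegral.continuous_parametric_intervalIntegral_of_continuous' hFc 0 1
  -- definition of the operator T
  set T : ContinuousMap (Set.Icc (0:ℝ) 1) ℝ → ContinuousMap (Set.Icc (0:ℝ) 1) ℝ :=
    fun u => ContinuousMap.mk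
      (fun t : Set.Icc (0:ℝ) 1 =>
        H₁ u * gam α η β (t : ℝ) + H₂ u + ∫ s in (0:ℝ)..1, F (u, (t : ℝ)) s)
      (by
        apply Continuous.add
        · apply Continuous.add
          · exact continuous_const.mul (hgamc.comp continuous_subtype_val)
          · exact continuous_const
        · exact hint.comp (continuous_const.prodMk continuous_subtype_val)) with hT_def
  refine ⟨T, ?_, ?_, ?_⟩
  · -- the formula
    intro u t
    show H₁ u * gam α η β (t : ℝ) + H₂ u + (∫ s in (0:ℝ)..1, F (u, (t : ℝ)) s) = _
    congr 1
    apply intervalIntegral.integral_congr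
    intro s hs
    rw [Set.uIcc_of_le (by norm_num : (0:ℝ) ≤ 1)] at hs
    show Kp α η β (t : ℝ) s * fc (s, u (Set.projIcc (0:ℝ) 1 zero_le_one s)) = _
    rw [hfc_eq s hs]
    show Kp α η β (t : ℝ) s * f s (u (Set.projIcc (0:ℝ) 1 zero_le_one s))
        = Kker α η β (t : ℝ) s * f s (Set.IccExtend zero_le_one u s)
    rw [Kp_eq_Kker hα1 η β t.2 hs]
    rfl
  · -- continuity of T
    apply ContinuousMap.continuous_of_continuous_uncurry
    show Continuous fun p : ContinuousMap (Set.Icc (0:ℝ) 1) ℝ × Set.Icc (0:ℝ) 1 =>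
      H₁ p.1 * gam α η β (p.2 : ℝ) + H₂ p.1 + ∫ s in (0:ℝ)..1, F (p.1, (p.2 : ℝ)) s
    apply Continuous.add
    · apply Continuous.add
      · exact (hH₁c.comp continuous_fst).mul
          (hgamc.comp (continuous_subtype_val.comp continuous_snd))
      · exact hH₂c.comp continuous_fst
    · exact hint.comp (continuous_fst.prodMk (continuous_subtype_val.comp continuous_snd))
  · -- complete continuity
    intro S hS
    obtain ⟨M0, hM0⟩ := isBounded_iff_forall_norm_le.1 hS
    set M := max M0 0 with hM_def
    have hM : ∀ u ∈ S, ‖u‖ ≤ M := fun u hu => (hM0 u hu).trans (le_max_left _ _)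
    obtain ⟨M1', hM1'⟩ := isBounded_iff_forall_norm_le.1 (hH₁b S hS)
    set M₁ := max M1' 0 with hM₁_def
    have hM1 : ∀ u ∈ S, |H₁ u| ≤ M₁ := fun u hu => le_trans
      (by simpa [Real.norm_eq_abs] using hM1' _ (Set.mem_image_of_mem H₁ hu)) (le_max_left _ _)
    have hM1nn : (0:ℝ) ≤ M₁ := le_max_right _ _
    obtain ⟨M2', hM2'⟩ := isBounded_iff_forall_norm_le.1 (hH₂b S hS)
    set M₂ := max M2' 0 with hM₂_def
    have hM2 : ∀ u ∈ S, |H₂ u| ≤ M₂ := fun u hu => le_trans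
      (by simpa [Real.norm_eq_abs] using hM2' _ (Set.mem_image_of_mem H₂ hu)) (le_max_left _ _)
    -- bound on fc along members of S
    obtain ⟨C0, hC0⟩ := (isCompact_Icc.prod isCompact_Icc :
      IsCompact (Set.Icc (0:ℝ) 1 ×ˢ Set.Icc (-M) M)).exists_bound_of_continuousOn
      hfcc.continuousOn
    set C := max C0 0 with hC_def
    have hCnn : (0:ℝ) ≤ C := le_max_right _ _
    have hfcb : ∀ u ∈ S, ∀ s ∈ Set.Icc (0:ℝ) 1,
        |fc (s, u (Set.projIcc (0:ℝ) 1 zero_le_one s))| ≤ C := by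
      intro u hu s hs
      have h1 : |u (Set.projIcc (0:ℝ) 1 zero_le_one s)| ≤ M := by
        have := (u.norm_coe_le_norm (Set.projIcc (0:ℝ) 1 zero_le_one s)).trans (hM u hu)
        simpa [Real.norm_eq_abs] using this
      have hmem : ((s : ℝ), u (Set.projIcc (0:ℝ) 1 zero_le_one s))
          ∈ Set.Icc (0:ℝ) 1 ×ˢ Set.Icc (-M) M :=
        Set.mem_prod.2 ⟨hs, Set.mem_Icc.2 (abs_le.1 h1)⟩
      exact le_trans (by simpa [Real.norm_eq_abs] using hC0 _ hmem) (le_max_left _ _)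
    set KB := β + 2 / Real.Gamma α with hKB_def
    have hKBnn : (0:ℝ) ≤ KB := add_nonneg hβ.le (div_nonneg (by norm_num) hΓ.le)
    set G := β / Real.Gamma (3 - α) + 1 with hG_def
    have hGnn : (0:ℝ) ≤ G := add_nonneg (div_nonneg hβ.le hΓ3.le) zero_le_one
    have hGam_bd : ∀ t : Set.Icc (0:ℝ) 1, |gam α η β (t : ℝ)| ≤ G := by
      intro t
      obtain ⟨ht0, ht1⟩ := Set.mem_Icc.1 t.2
      have h0 : 0 < β / Real.Gamma (3 - α) := div_pos hβ hΓ3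
      rw [hG_def]
      unfold gam
      rw [abs_le]
      constructor <;> linarith
    set R := M₁ * G + M₂ + KB * C with hR_def
    -- pointwise bound for the integral term
    have hintb : ∀ u ∈ S, ∀ t : Set.Icc (0:ℝ) 1,
        |∫ s in (0:ℝ)..1, F (u, (t : ℝ)) s| ≤ KB * C := by
      intro u hu t
      have h := intervalIntegral.norm_integral_le_of_norm_le_const (C := KB * C)
        (f := F (u, (t : ℝ))) (a := 0) (b := 1) ?_
      · simpa [Real.norm_eq_abs] using h
      · intro s hsI
        rw [Set.uIoc_of_le (by norm_num : (0:ℝ) ≤ 1)] at hsI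
        have hs' : s ∈ Set.Icc (0:ℝ) 1 := ⟨hsI.1.le, hsI.2⟩
        show ‖Kp α η β (t : ℝ) s * fc (s, u (Set.projIcc (0:ℝ) 1 zero_le_one s))‖ ≤ KB * C
        rw [Real.norm_eq_abs, abs_mul]
        exact mul_le_mul (Kp_bound hα1 hη1 hβ t.2 hs') (hfcb u hu s hs') (abs_nonneg _) hKBnn
    -- range bound
    have hrange : ∀ u ∈ S, ∀ x : Set.Icc (0:ℝ) 1, T u x ∈ Set.Icc (-R) R := by
      intro u hu x
      have h1 : |T u x| ≤ R := by
        show |H₁ u * gam α η β (x : ℝ) + H₂ u + ∫ s in (0:ℝ)..1, F (u, (x : ℝ)) s| ≤ R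
        calc |H₁ u * gam α η β (x : ℝ) + H₂ u + ∫ s in (0:ℝ)..1, F (u, (x : ℝ)) s|
            ≤ |H₁ u * gam α η β (x : ℝ)| + |H₂ u| + |∫ s in (0:ℝ)..1, F (u, (x : ℝ)) s| :=
              abs_add_three _ _ _
          _ ≤ M₁ * G + M₂ + KB * C := by
              refine add_le_add (add_le_add ?_ (hM2 u hu)) (hintb u hu x)
              rw [abs_mul]
              exact mul_le_mul (hM1 u hu) (hGam_bd x) (abs_nonneg _) hM1nn
      exact Set.mem_Icc.2 (abs_le.1 h1)
    -- modulus of continuity shared by the family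
    have hmod : ∀ u ∈ S, ∀ x y : Set.Icc (0:ℝ) 1,
        dist (T u x) (T u y) ≤ M₁ * dist x y + C / Real.Gamma α * dist x y ^ (α - 1) := by
      intro u hu x y
      have hix : IntervalIntegrable (F (u, (x : ℝ))) volume 0 1 :=
        (hIc _).intervalIntegrable _ _
      have hiy : IntervalIntegrable (F (u, (y : ℝ))) volume 0 1 :=
        (hIc _).intervalIntegrable _ _
      have hsubint : (∫ s in (0:ℝ)..1, F (u, (x : ℝ)) s) - ∫ s in (0:ℝ)..1, F (u, (y : ℝ)) s
          = ∫ s in (0:ℝ)..1, (F (u, (x : ℝ)) s - F (u, (y : ℝ)) s) :=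
        (intervalIntegral.integral_sub hix hiy).symm
      have hibd : |∫ s in (0:ℝ)..1, (F (u, (x : ℝ)) s - F (u, (y : ℝ)) s)|
          ≤ C / Real.Gamma α * |(x : ℝ) - (y : ℝ)| ^ (α - 1) := by
        have h := intervalIntegral.norm_integral_le_of_norm_le_const
          (C := C / Real.Gamma α * |(x : ℝ) - (y : ℝ)| ^ (α - 1))
          (f := fun s => F (u, (x : ℝ)) s - F (u, (y : ℝ)) s) (a := 0) (b := 1) ?_
        · simpa [Real.norm_eq_abs] using h
        · intro s hsI
          rw [Set.uIoc_of_le (by norm_num : (0:ℝ) ≤ 1)] at hsI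
          have hs' : s ∈ Set.Icc (0:ℝ) 1 := ⟨hsI.1.le, hsI.2⟩
          show ‖F (u, (x : ℝ)) s - F (u, (y : ℝ)) s‖
              ≤ C / Real.Gamma α * |(x : ℝ) - (y : ℝ)| ^ (α - 1)
          have he : F (u, (x : ℝ)) s - F (u, (y : ℝ)) s
              = (Kp α η β (x : ℝ) s - Kp α η β (y : ℝ) s)
                * fc (s, u (Set.projIcc (0:ℝ) 1 zero_le_one s)) := by
            simp only [hF_def]; ring
          rw [Real.norm_eq_abs, he, abs_mul]
          calc |Kp α η β (x : ℝ) s - Kp α η β (y : ℝ) s|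
                * |fc (s, u (Set.projIcc (0:ℝ) 1 zero_le_one s))|
              ≤ (|(x : ℝ) - (y : ℝ)| ^ (α - 1) / Real.Gamma α) * C := by
                apply mul_le_mul (Kp_holder hα1 hα2 _ _ _) (hfcb u hu s hs') (abs_nonneg _)
                positivity
            _ = C / Real.Gamma α * |(x : ℝ) - (y : ℝ)| ^ (α - 1) := by ring
      have hgam_diff : |gam α η β (x : ℝ) - gam α η β (y : ℝ)| ≤ |(x : ℝ) - (y : ℝ)| := by
        unfold gam
        have he : β / Real.Gamma (3 - α) + η - (x : ℝ) - (β / Real.Gamma (3 - α) + η - (y : ℝ))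
            = -((x : ℝ) - (y : ℝ)) := by ring
        rw [he, abs_neg]
      have hTsub : T u x - T u y
          = H₁ u * (gam α η β (x : ℝ) - gam α η β (y : ℝ))
            + ((∫ s in (0:ℝ)..1, F (u, (x : ℝ)) s) - ∫ s in (0:ℝ)..1, F (u, (y : ℝ)) s) := by
        show (H₁ u * gam α η β (x : ℝ) + H₂ u + ∫ s in (0:ℝ)..1, F (u, (x : ℝ)) s)
            - (H₁ u * gam α η β (y : ℝ) + H₂ u + ∫ s in (0:ℝ)..1, F (u, (y : ℝ)) s) = _
        ring
      rw [Real.dist_eq, hTsub, Subtype.dist_eq, Real.dist_eq]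
      calc |H₁ u * (gam α η β (x : ℝ) - gam α η β (y : ℝ))
            + ((∫ s in (0:ℝ)..1, F (u, (x : ℝ)) s) - ∫ s in (0:ℝ)..1, F (u, (y : ℝ)) s)|
          ≤ |H₁ u * (gam α η β (x : ℝ) - gam α η β (y : ℝ))|
            + |(∫ s in (0:ℝ)..1, F (u, (x : ℝ)) s) - ∫ s in (0:ℝ)..1, F (u, (y : ℝ)) s| :=
            abs_add_le _ _
        _ ≤ M₁ * |(x : ℝ) - (y : ℝ)| + C / Real.Gamma α * |(x : ℝ) - (y : ℝ)| ^ (α - 1) := by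
            refine add_le_add ?_ (by rw [hsubint]; exact hibd)
            rw [abs_mul]
            exact mul_le_mul (hM1 u hu) hgam_diff (abs_nonneg _) hM1nn
    -- the common modulus tends to 0
    have hb_lim : Filter.Tendsto (fun d : ℝ => M₁ * d + C / Real.Gamma α * d ^ (α - 1))
        (nhds 0) (nhds 0) := by
      have h1 : Filter.Tendsto (fun d : ℝ => d ^ (α - 1)) (nhds 0) (nhds 0) := by
        have h := (Real.continuousAt_rpow_const 0 (α - 1) (Or.inr (by linarith))).tendsto
        have h0 : ((0:ℝ)) ^ (α - 1) = 0 := Real.zero_rpow (sub_ne_zero.2 (ne_of_gt hα1))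
        simpa [h0] using h
      have h2 := (Filter.tendsto_id.const_mul M₁).add (h1.const_mul (C / Real.Gamma α))
      simpa using h2
    -- Arzelà–Ascoli
    set e : ContinuousMap (Set.Icc (0:ℝ) 1) ℝ ≃ᵢ (Set.Icc (0:ℝ) 1 →ᵇ ℝ) :=
      ContinuousMap.isometryEquivBoundedOfCompact _ _ with he_def
    set A : Set (Set.Icc (0:ℝ) 1 →ᵇ ℝ) := (fun v => e v) '' (T '' S) with hA_def
    have hAc : IsCompact (closure A) := by
      apply BoundedContinuousFunction.arzela_ascoli (Set.Icc (-R) R) isCompact_Icc A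
      · rintro v x ⟨w, ⟨u, hu, rfl⟩, rfl⟩
        exact hrange u hu x
      · apply Metric.equicontinuous_of_continuity_modulus
          (fun d => M₁ * d + C / Real.Gamma α * d ^ (α - 1)) hb_lim
        rintro x y ⟨v, ⟨w, ⟨u, hu, rfl⟩, rfl⟩⟩
        exact hmod u hu x y
    have himg : closure (T '' S) = e.symm '' closure A := by
      rw [hA_def]
      have h1 : closure ((fun v => e v) '' (T '' S)) = (fun v => e v) '' closure (T '' S) :=
        (e.toHomeomorph.image_closure _).symm
      rw [h1, Set.image_image]
      simp
    rw [himg]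
    exact hAc.image e.symm.continuous
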